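/- Let A be a local ring with involution * such that 2 is a unit, a − a* lies in the Jacobson radical r for every a ∈ A, and r is nilpotent. Then any two invertible skew-hermitian matrices of the same size over A are congruent: if J₁, J₂ ∈ M_n(A) are invertible with J₁ᴴ = −J₁ and J₂ᴴ = −J₂, then there exists P ∈ GL_n(A) with PᴴJ₁P = J₂. (Equivalently, all non-degenerate skew-hermitian forms on a free right A-module of rank n are equivalent.) -/

import Mathlib

open Matrix

section Aux

variable {A : Type*} [Ring A] [StarRing A] [IsLocalRing A]

lemma nu_add {a b : A} (ha : a ∈ nonunits A) (hb : b ∈ nonunits A) :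
    a + b ∈ nonunits A := by
  intro h
  have h1 : (↑h.unit⁻¹ : A) * a + (↑h.unit⁻¹ : A) * b = 1 := by
    rw [← mul_add]
    have := h.val_inv_mul
    simpa [h.unit_spec] using this
  rcases IsLocalRing.isUnit_or_isUnit_of_add_one h1 with h' | h'
  · refine ha ?_
    have := (h.unit.isUnit).mul h'
    rwa [← mul_assoc, h.unit.mul_inv, one_mul] at this
  · refine hb ?_
    have := (h.unit.isUnit).mul h'
    rwa [← mul_assoc, h.unit.mul_inv, one_mul] at this

lemma nu_zero : (0 : A) ∈ nonunits A := by
  intro h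
  exact one_ne_zero (isUnit_zero_iff.mp h).symm

lemma nu_neg {a : A} (ha : a ∈ nonunits A) : -a ∈ nonunits A := by
  intro h
  exact ha (by simpa using h.neg)

lemma nu_one_add {x : A} (hx : x ∈ nonunits A) : IsUnit (1 + x) := by
  by_contra h
  exact (nu_add h (nu_neg hx)) (by simpa using isUnit_one)

lemma nu_mul_right {x : A} (hx : x ∈ nonunits A) (a : A) : a * x ∈ nonunits A := by
  intro h
  set b := (↑h.unit⁻¹ : A) * a with hbdef
  have hbx : b * x = 1 := by
    rw [hbdef, mul_assoc]
    have := h.val_inv_mul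
    simpa [h.unit_spec] using this
  by_cases hxb : IsUnit (x * b)
  · have hidem : (x * b) * (x * b) = x * b := by
      rw [mul_assoc, ← mul_assoc b x b, hbx, one_mul]
    have hone : x * b = 1 := by
      have := congrArg (fun t => t * (↑hxb.unit⁻¹ : A)) hidem
      simpa [mul_assoc, hxb.mul_val_inv] using this
    exact hx ⟨⟨x, b, hone, hbx⟩, rfl⟩
  · by_cases h1 : IsUnit (1 - x * b)
    · have hz : (1 - x * b) * x = 0 := by
        have : (x * b) * x = x := by rw [mul_assoc, hbx, mul_one]
        rw [sub_mul, one_mul, this, sub_self]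
      have hx0 : x = 0 := by
        have := congrArg (fun t => (↑h1.unit⁻¹ : A) * t) hz
        simp only [← mul_assoc] at this
        have h2' : (↑h1.unit⁻¹ : A) * (1 - x * b) = 1 := by
          have := h1.val_inv_mul
          simpa [h1.unit_spec] using this
        rw [h2'] at this
        simpa using this
      rw [hx0, mul_zero] at hbx
      exact one_ne_zero hbx.symm
    · have : (1 - x * b) + x * b = 1 := sub_add_cancel 1 (x*b)
      exact (this ▸ nu_add h1 hxb) isUnit_one

lemma nu_mul_left {x : A} (hx : x ∈ nonunits A) (a : A) : x * a ∈ nonunits A := by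
  intro h
  set c := a * (↑h.unit⁻¹ : A) with hcdef
  have hxc : x * c = 1 := by
    rw [hcdef, ← mul_assoc]
    have := h.mul_val_inv
    simpa [h.unit_spec] using this
  by_cases hcx : IsUnit (c * x)
  · have hidem : (c * x) * (c * x) = c * x := by
      rw [mul_assoc, ← mul_assoc x c x, hxc, one_mul]
    have hone : c * x = 1 := by
      have := congrArg (fun t => t * (↑hcx.unit⁻¹ : A)) hidem
      simpa [mul_assoc, hcx.mul_val_inv] using this
    exact hx ⟨⟨x, c, hxc, hone⟩, rfl⟩
  · by_cases h1 : IsUnit (1 - c * x)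
    · have hz : x * (1 - c * x) = 0 := by
        have : x * (c * x) = x := by rw [← mul_assoc, hxc, one_mul]
        rw [mul_sub, mul_one, this, sub_self]
      have hx0 : x = 0 := by
        have := congrArg (fun t => t * (↑h1.unit⁻¹ : A)) hz
        simp only [mul_assoc] at this
        rw [h1.mul_val_inv] at this
        simpa using this
      rw [hx0, zero_mul] at hxc
      exact one_ne_zero hxc.symm
    · have : (1 - c * x) + c * x = 1 := sub_add_cancel 1 (c*x)
      exact (this ▸ nu_add h1 hcx) isUnit_one

lemma nu_star {x : A} (hx : x ∈ nonunits A) : star x ∈ nonunits A := by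
  intro h
  exact hx (isUnit_star.mp h)

lemma nu_sum {β : Type*} {s : Finset β} {f : β → A} (hf : ∀ i ∈ s, f i ∈ nonunits A) :
    ∑ i ∈ s, f i ∈ nonunits A := by
  classical
  induction s using Finset.induction_on with
  | empty => simpa using nu_zero
  | insert a s hnot ih =>
    rw [Finset.sum_insert hnot]
    exact nu_add (hf a (Finset.mem_insert_self a s))
      (ih fun i hi => hf i (Finset.mem_insert_of_mem hi))

end Aux
section MM

variable (A : Type*) [Ring A] [StarRing A] [IsLocalRing A]

/-- Additive subgroup generated by products of `t` nonunits. -/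
def MM (t : ℕ) : AddSubgroup A :=
  AddSubgroup.closure {x | ∃ l : List A, l.length = t ∧ (∀ y ∈ l, y ∈ nonunits A) ∧ l.prod = x}

variable {A}

lemma mem_MM_of_nonunit {x : A} (hx : x ∈ nonunits A) : x ∈ MM A 1 :=
  AddSubgroup.subset_closure ⟨[x], rfl, by simpa using hx, by simp⟩

lemma MM_mul_left {t : ℕ} (ht : t ≠ 0) (a : A) {x : A} (hx : x ∈ MM A t) :
    a * x ∈ MM A t := by
  induction hx using AddSubgroup.closure_induction with
  | mem y hy =>
    obtain ⟨l, hlen, hnu, hprod⟩ := hy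
    match l, hlen with
    | z :: l', hlen =>
      refine AddSubgroup.subset_closure ⟨(a * z) :: l', by simpa using hlen, ?_, ?_⟩
      · intro y hy
        rcases List.mem_cons.mp hy with rfl | hy
        · exact nu_mul_right (hnu z (List.mem_cons_self)) a
        · exact hnu y (List.mem_cons_of_mem _ hy)
      · rw [List.prod_cons, mul_assoc, ← List.prod_cons, hprod]
    | [], hlen => exact absurd hlen.symm ht
  | zero => simpa using AddSubgroup.zero_mem _
  | add y z _ _ hy hz => simpa [mul_add] using AddSubgroup.add_mem _ hy hz
  | neg y _ hy => simpa [mul_neg] using AddSubgroup.neg_mem _ hy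

lemma MM_mul_right {t : ℕ} (ht : t ≠ 0) {x : A} (hx : x ∈ MM A t) (a : A) :
    x * a ∈ MM A t := by
  induction hx using AddSubgroup.closure_induction with
  | mem y hy =>
    obtain ⟨l, hlen, hnu, hprod⟩ := hy
    rcases List.eq_nil_or_concat l with rfl | ⟨l', z, rfl⟩
    · exact absurd hlen.symm ht
    · refine AddSubgroup.subset_closure ⟨l'.concat (z * a), by simpa using hlen, ?_, ?_⟩
      · intro y hy
        rw [List.concat_eq_append, List.mem_append] at hy
        rcases hy with hy | hy
        · exact hnu y (by simp [hy])
        · rw [List.mem_singleton] at hy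
          subst hy
          exact nu_mul_left (hnu z (by simp)) a
      · rw [List.prod_concat, ← mul_assoc, ← List.prod_concat, hprod]
  | zero => simpa using AddSubgroup.zero_mem _
  | add y z _ _ hy hz => simpa [add_mul] using AddSubgroup.add_mem _ hy hz
  | neg y _ hy => simpa [neg_mul] using AddSubgroup.neg_mem _ hy

lemma MM_mul_mem {t s : ℕ} {x y : A} (hx : x ∈ MM A t) (hy : y ∈ MM A s) :
    x * y ∈ MM A (t + s) := by
  induction hx using AddSubgroup.closure_induction with
  | mem x' hx' =>
    induction hy using AddSubgroup.closure_induction with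
    | mem y' hy' =>
      obtain ⟨l₁, hl1, hnu1, hp1⟩ := hx'
      obtain ⟨l₂, hl2, hnu2, hp2⟩ := hy'
      refine AddSubgroup.subset_closure ⟨l₁ ++ l₂, by simp [hl1, hl2], ?_, ?_⟩
      · intro z hz
        rcases List.mem_append.mp hz with hz | hz
        · exact hnu1 z hz
        · exact hnu2 z hz
      · rw [List.prod_append, hp1, hp2]
    | zero => simpa using AddSubgroup.zero_mem _
    | add u v _ _ hu hv => simpa [mul_add] using AddSubgroup.add_mem _ hu hv
    | neg u _ hu => simpa [mul_neg] using AddSubgroup.neg_mem _ hu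
  | zero => simpa using AddSubgroup.zero_mem _
  | add u v _ _ hu hv => simpa [add_mul] using AddSubgroup.add_mem _ hu hv
  | neg u _ hu => simpa [neg_mul] using AddSubgroup.neg_mem _ hu

lemma star_list_prod (l : List A) : star l.prod = (l.reverse.map star).prod := by
  induction l with
  | nil => simp
  | cons y l ih =>
    rw [List.prod_cons, StarMul.star_mul, ih, List.reverse_cons, List.map_append]
    simp [List.prod_append]

lemma MM_star {t : ℕ} {x : A} (hx : x ∈ MM A t) : star x ∈ MM A t := by
  induction hx using AddSubgroup.closure_induction with
  | mem y hy =>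
    obtain ⟨l, hlen, hnu, hprod⟩ := hy
    refine AddSubgroup.subset_closure ⟨l.reverse.map star, by simp [hlen], ?_, ?_⟩
    · intro z hz
      obtain ⟨w, hw, rfl⟩ := List.mem_map.mp hz
      exact nu_star (hnu w (List.mem_reverse.mp hw))
    · rw [← star_list_prod, hprod]
  | zero => simpa using AddSubgroup.zero_mem _
  | add u v _ _ hu hv => simpa [star_add] using AddSubgroup.add_mem _ hu hv
  | neg u _ hu => simpa [star_neg] using AddSubgroup.neg_mem _ hu

lemma MM_nonunit {t : ℕ} (ht : t ≠ 0) {x : A} (hx : x ∈ MM A t) : x ∈ MM A 1 := by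
  induction hx using AddSubgroup.closure_induction with
  | mem y hy =>
    obtain ⟨l, hlen, hnu, hprod⟩ := hy
    match l, hlen with
    | z :: l', hlen =>
      refine mem_MM_of_nonunit ?_
      rw [← hprod, List.prod_cons]
      exact nu_mul_left (hnu z (List.mem_cons_self)) _
    | [], hlen => exact absurd hlen.symm ht
  | zero => simpa using AddSubgroup.zero_mem _
  | add u v _ _ hu hv => exact AddSubgroup.add_mem _ hu hv
  | neg u _ hu => exact AddSubgroup.neg_mem _ hu

lemma MM_eq_zero {e : ℕ}
    (hprod : ∀ l : List A, l.length = e → (∀ x ∈ l, x ∈ nonunits A) → l.prod = 0)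
    {t : ℕ} (het : e ≤ t) {x : A} (hx : x ∈ MM A t) : x = 0 := by
  have hsub : MM A t ≤ ⊥ := by
    rw [MM, AddSubgroup.closure_le]
    rintro y ⟨l, hlen, hnu, hp⟩
    have h1 : (l.take e).prod = 0 := by
      refine hprod _ ?_ ?_
      · simp [List.length_take, hlen, het]
      · exact fun z hz => hnu z (List.mem_of_mem_take hz)
    have := List.prod_take_mul_prod_drop l e
    rw [h1, zero_mul] at this
    simpa using (hp ▸ this.symm : y = 0)
  simpa using hsub hx

end MM
section MatrixAux

variable {A : Type*} [Ring A] [StarRing A] [IsLocalRing A]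
variable {ι : Type*} [Fintype ι] [DecidableEq ι]

lemma EI_mul_left {t : ℕ} (ht : t ≠ 0) (Y : Matrix ι ι A) {X : Matrix ι ι A}
    (hX : ∀ i j, X i j ∈ MM A t) : ∀ i j, (Y * X) i j ∈ MM A t := by
  intro i j
  rw [Matrix.mul_apply]
  exact AddSubgroup.sum_mem _ fun k _ => MM_mul_left ht _ (hX k j)

lemma EI_mul_right {t : ℕ} (ht : t ≠ 0) {X : Matrix ι ι A} (Y : Matrix ι ι A)
    (hX : ∀ i j, X i j ∈ MM A t) : ∀ i j, (X * Y) i j ∈ MM A t := by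
  intro i j
  rw [Matrix.mul_apply]
  exact AddSubgroup.sum_mem _ fun k _ => MM_mul_right ht (hX i k) _

lemma EI_mul_mul {t s : ℕ} {X Y : Matrix ι ι A}
    (hX : ∀ i j, X i j ∈ MM A t) (hY : ∀ i j, Y i j ∈ MM A s) :
    ∀ i j, (X * Y) i j ∈ MM A (t + s) := by
  intro i j
  rw [Matrix.mul_apply]
  exact AddSubgroup.sum_mem _ fun k _ => MM_mul_mem (hX i k) (hY k j)

lemma EI_pow_zero {e : ℕ} (he : e ≠ 0)
    (hprod : ∀ l : List A, l.length = e → (∀ x ∈ l, x ∈ nonunits A) → l.prod = 0)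
    {X : Matrix ι ι A} (hX : ∀ i j, X i j ∈ MM A 1) : X ^ e = 0 := by
  have key : ∀ k, ∀ i j, (X ^ (k + 1)) i j ∈ MM A (k + 1) := by
    intro k
    induction k with
    | zero => simpa [pow_one] using hX
    | succ k ih =>
      have : X ^ (k + 1 + 1) = X ^ (k + 1) * X := pow_succ X (k + 1)
      rw [this]
      exact EI_mul_mul ih hX
  obtain ⟨e', rfl⟩ : ∃ e', e = e' + 1 := ⟨e - 1, by omega⟩
  ext i j
  have := key e' i j
  simpa using MM_eq_zero hprod le_rfl this

lemma isUnit_ct {M : Matrix ι ι A} (h : IsUnit M) : IsUnit Mᴴ := by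
  obtain ⟨B, hB1, hB2⟩ := isUnit_iff_exists.mp h
  refine isUnit_iff_exists.mpr ⟨Bᴴ, ?_, ?_⟩
  · rw [← conjTranspose_mul, hB2, conjTranspose_one]
  · rw [← conjTranspose_mul, hB1, conjTranspose_one]

lemma mul_usmul {u : A} (ucen : ∀ a : A, u * a = a * u) (M N : Matrix ι ι A) :
    M * (u • N) = u • (M * N) := by
  ext i j
  simp only [Matrix.mul_apply, Matrix.smul_apply, smul_eq_mul, Finset.mul_sum]
  refine Finset.sum_congr rfl fun k _ => ?_
  rw [← mul_assoc, ← ucen (M i k), mul_assoc]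

lemma usmul_mul {u : A} (M N : Matrix ι ι A) :
    (u • M) * N = u • (M * N) := by
  ext i j
  simp only [Matrix.mul_apply, Matrix.smul_apply, smul_eq_mul, Finset.mul_sum]
  exact Finset.sum_congr rfl fun k _ => (mul_assoc _ _ _)

lemma conjT_usmul {u : A} (ustar : star u = u) (ucen : ∀ a : A, u * a = a * u)
    (M : Matrix ι ι A) : (u • M)ᴴ = u • Mᴴ := by
  ext i j
  simp only [Matrix.conjTranspose_apply, Matrix.smul_apply, smul_eq_mul, star_mul', ustar]
  rw [StarMul.star_mul, ustar, ucen]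

lemma newton {e : ℕ} (he : e ≠ 0)
    (hprod : ∀ l : List A, l.length = e → (∀ x ∈ l, x ∈ nonunits A) → l.prod = 0)
    (h2 : IsUnit (2 : A)) (S : Matrix ι ι A) (hS : Sᴴ = -S) :
    ∀ (k t : ℕ), t ≠ 0 → e ≤ t + k → ∀ G : Matrix ι ι A, IsUnit G → Gᴴ = -G →
    (∀ i j, (G - S) i j ∈ MM A t) →
    ∃ Q : Matrix ι ι A, IsUnit Q ∧ Qᴴ * G * Q = S := by
  intro k
  induction k with
  | zero =>
    intro t ht het G hG hGh hE
    have hGS : G = S := by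
      ext i j
      have := MM_eq_zero hprod (by omega : e ≤ t) (hE i j)
      rw [Matrix.sub_apply] at this
      exact sub_eq_zero.mp this
    exact ⟨1, isUnit_one, by simp [hGS]⟩
  | succ k ih =>
    intro t ht het G hG hGh hE
    by_cases hcase : e ≤ t
    · have hGS : G = S := by
        ext i j
        have := MM_eq_zero hprod hcase (hE i j)
        rw [Matrix.sub_apply] at this
        exact sub_eq_zero.mp this
      exact ⟨1, isUnit_one, by simp [hGS]⟩
    · push_neg at hcase
      obtain ⟨Gi, hGiG, hGGi⟩ : ∃ Gi : Matrix ι ι A, Gi * G = 1 ∧ G * Gi = 1 :=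
        ⟨_, hG.val_inv_mul, hG.mul_val_inv⟩
      set u : A := ((h2.unit⁻¹ : Aˣ) : A) with hudef
      have hu2 : (2 : A) * u = 1 := h2.mul_val_inv
      have hu2' : u * (2 : A) = 1 := h2.val_inv_mul
      have ucen : ∀ a : A, u * a = a * u := by
        intro a
        have h2c : (2 : A) * a = a * 2 := by rw [two_mul, mul_two]
        calc u * a = u * a * (2 * u) := by rw [hu2, mul_one]
          _ = u * (a * 2) * u := by rw [← mul_assoc, mul_assoc u a 2]
          _ = u * (2 * a) * u := by rw [← h2c]
          _ = a * u := by rw [← mul_assoc u 2 a, hu2', one_mul]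
      have hstar2 : star (2 : A) = 2 := by
        rw [show (2 : A) = 1 + 1 from one_add_one_eq_two.symm, star_add, star_one,
          one_add_one_eq_two]
      have ustar : star u = u := by
        have h1 : star u * 2 = 1 := by
          rw [← hstar2, ← StarMul.star_mul, hu2, star_one]
        calc star u = star u * (2 * u) := by rw [hu2, mul_one]
          _ = (star u * 2) * u := by rw [mul_assoc]
          _ = u := by rw [h1, one_mul]
      set E : Matrix ι ι A := G - S with hEdef
      have hEH : Eᴴ = -E := by
        rw [hEdef, conjTranspose_sub, hGh, hS, neg_sub_neg, neg_sub]
      have hGiH : Giᴴ = -Gi := by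
        have hGn : -(Gᴴ) = G := by rw [hGh, neg_neg]
        have h1 : Giᴴ * G = -1 := by
          have h0 : Giᴴ * Gᴴ = 1 := by
            rw [← conjTranspose_mul, hGGi, conjTranspose_one]
          calc Giᴴ * G = Giᴴ * -(Gᴴ) := by rw [hGn]
            _ = -(Giᴴ * Gᴴ) := by rw [mul_neg]
            _ = -1 := by rw [h0]
        calc Giᴴ = Giᴴ * (G * Gi) := by rw [hGGi, mul_one]
          _ = (Giᴴ * G) * Gi := by rw [mul_assoc]
          _ = -Gi := by rw [h1, neg_one_mul]
      set X : Matrix ι ι A := u • (Gi * E) with hXdef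
      have hXE : ∀ i j, X i j ∈ MM A t := by
        intro i j
        rw [hXdef, Matrix.smul_apply, smul_eq_mul]
        exact MM_mul_left ht u (EI_mul_left ht Gi hE i j)
      have hX1 : ∀ i j, X i j ∈ MM A 1 := fun i j => MM_nonunit ht (hXE i j)
      have hXnil : X ^ e = 0 := EI_pow_zero he hprod hX1
      set Q₁ : Matrix ι ι A := 1 - X with hQ1def
      have hQ1 : IsUnit Q₁ := IsNilpotent.isUnit_one_sub ⟨e, hXnil⟩
      have hXH : Xᴴ = u • (E * Gi) := by
        rw [hXdef, conjT_usmul ustar ucen, conjTranspose_mul, hEH, hGiH, neg_mul_neg]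
      have hQH : Q₁ᴴ = 1 - u • (E * Gi) := by
        rw [hQ1def, conjTranspose_sub, conjTranspose_one, hXH]
      have hGQ : G * Q₁ = G - u • E := by
        rw [hQ1def, mul_sub, mul_one, hXdef, mul_usmul ucen, ← mul_assoc, hGGi, one_mul]
      have e1 : (u • (E * Gi)) * (G - u • E) = u • E - (u * u) • (E * Gi * E) := by
        rw [usmul_mul, mul_sub, mul_usmul ucen, mul_assoc E Gi G, hGiG, mul_one,
          smul_sub, smul_smul]
      have key : Q₁ᴴ * G * Q₁ = S + (u * u) • (E * Gi * E) := by
        have huu : u • E + u • E = E := by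
          rw [← add_smul, ← two_mul, hu2, one_smul]
        calc Q₁ᴴ * G * Q₁ = Q₁ᴴ * (G * Q₁) := by rw [mul_assoc]
          _ = (1 - u • (E * Gi)) * (G - u • E) := by rw [hGQ, hQH]
          _ = (G - u • E) - ((u • (E * Gi)) * (G - u • E)) := by rw [sub_mul, one_mul]
          _ = (G - u • E) - (u • E - (u * u) • (E * Gi * E)) := by rw [e1]
          _ = G - (u • E + u • E) + (u * u) • (E * Gi * E) := by abel
          _ = G - E + (u * u) • (E * Gi * E) := by rw [huu]
          _ = S + (u * u) • (E * Gi * E) := by rw [hEdef, sub_sub_cancel]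
      set G' : Matrix ι ι A := Q₁ᴴ * G * Q₁ with hG'def
      have hG'unit : IsUnit G' := ((isUnit_ct hQ1).mul hG).mul hQ1
      have hG'h : G'ᴴ = -G' := by
        rw [hG'def]
        simp only [conjTranspose_mul, conjTranspose_conjTranspose, hGh, neg_mul, mul_neg,
          mul_assoc]
      have hE' : ∀ i j, (G' - S) i j ∈ MM A (t + t) := by
        have hsub : G' - S = (u * u) • (E * Gi * E) := by
          rw [key, add_sub_cancel_left]
        intro i j
        rw [hsub, Matrix.smul_apply, smul_eq_mul]
        refine MM_mul_left (by omega) _ ?_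
        exact EI_mul_mul (EI_mul_right ht Gi hE) hE i j
      obtain ⟨Q', hQ'u, hQ'⟩ := ih (t + t) (by omega) (by omega) G' hG'unit hG'h hE'
      refine ⟨Q₁ * Q', hQ1.mul hQ'u, ?_⟩
      calc (Q₁ * Q')ᴴ * G * (Q₁ * Q') = Q'ᴴ * G' * Q' := by
            rw [hG'def, conjTranspose_mul]
            simp only [mul_assoc]
        _ = S := hQ'


end MatrixAux
section Cng

variable {A : Type*} [Ring A] [StarRing A]

/-- Congruence of square matrices: `J₂ = Pᴴ J₁ P` for some invertible `P`. -/
def Cng {ι : Type*} [Fintype ι] [DecidableEq ι] (J₁ J₂ : Matrix ι ι A) : Prop :=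
  ∃ P : Matrix ι ι A, IsUnit P ∧ Pᴴ * J₁ * P = J₂

variable {ι : Type*} [Fintype ι] [DecidableEq ι]

lemma cng_refl (J : Matrix ι ι A) : Cng J J :=
  ⟨1, isUnit_one, by simp⟩

lemma cng_trans {J₁ J₂ J₃ : Matrix ι ι A} (h12 : Cng J₁ J₂) (h23 : Cng J₂ J₃) :
    Cng J₁ J₃ := by
  obtain ⟨P, hP, hP2⟩ := h12
  obtain ⟨Q, hQ, hQ2⟩ := h23
  refine ⟨P * Q, hP.mul hQ, ?_⟩
  calc (P * Q)ᴴ * J₁ * (P * Q) = Qᴴ * (Pᴴ * J₁ * P) * Q := by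
        rw [conjTranspose_mul]
        simp only [mul_assoc]
    _ = J₃ := by rw [hP2, hQ2]

lemma cng_symm {J₁ J₂ : Matrix ι ι A} (h : Cng J₁ J₂) : Cng J₂ J₁ := by
  obtain ⟨P, hP, hP2⟩ := h
  obtain ⟨Q, hQ1, hQ2⟩ := isUnit_iff_exists.mp hP
  refine ⟨Q, isUnit_iff_exists.mpr ⟨P, hQ2, hQ1⟩, ?_⟩
  rw [← hP2]
  calc Qᴴ * (Pᴴ * J₁ * P) * Q
      = (P * Q)ᴴ * J₁ * (P * Q) := by
        rw [conjTranspose_mul]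
        simp only [mul_assoc]
    _ = J₁ := by rw [hQ1]; simp

lemma cng_isUnit {J₁ J₂ : Matrix ι ι A} [IsLocalRing A] (h : Cng J₁ J₂) (hJ : IsUnit J₁) :
    IsUnit J₂ := by
  obtain ⟨P, hP, hP2⟩ := h
  rw [← hP2]
  exact (isUnit_ct hP).mul hJ |>.mul hP

lemma cng_skew {J₁ J₂ : Matrix ι ι A} (h : Cng J₁ J₂) (hs : J₁ᴴ = -J₁) : J₂ᴴ = -J₂ := by
  obtain ⟨P, hP, hP2⟩ := h
  rw [← hP2]
  simp only [conjTranspose_mul, conjTranspose_conjTranspose, hs, neg_mul, mul_neg, mul_assoc]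

lemma cng_submatrix {κ : Type*} [Fintype κ] [DecidableEq κ] (e : κ ≃ ι)
    {J₁ J₂ : Matrix ι ι A} (h : Cng J₁ J₂) :
    Cng (J₁.submatrix e e) (J₂.submatrix e e) := by
  obtain ⟨P, hP, hP2⟩ := h
  obtain ⟨Q, hQ1, hQ2⟩ := isUnit_iff_exists.mp hP
  refine ⟨P.submatrix e e, ?_, ?_⟩
  · refine isUnit_iff_exists.mpr ⟨Q.submatrix e e, ?_, ?_⟩
    · rw [submatrix_mul_equiv, hQ1, submatrix_one_equiv]
    · rw [submatrix_mul_equiv, hQ2, submatrix_one_equiv]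
  · rw [conjTranspose_submatrix, submatrix_mul_equiv, submatrix_mul_equiv, hP2]

lemma one_submatrix_comm (σ : ι ≃ ι) :
    (1 : Matrix ι ι A).submatrix ⇑σ.symm id = (1 : Matrix ι ι A).submatrix id ⇑σ := by
  ext i j
  simp only [Matrix.submatrix_apply, Matrix.one_apply, id_eq]
  exact if_congr (Equiv.symm_apply_eq σ) rfl rfl

lemma cng_perm (σ : ι ≃ ι) (J : Matrix ι ι A) : Cng J (J.submatrix σ σ) := by
  set P : Matrix ι ι A := (1 : Matrix ι ι A).submatrix ⇑σ.symm id with hPdef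
  have hPalt : P = (1 : Matrix ι ι A).submatrix id ⇑σ := one_submatrix_comm σ
  have hQalt : (1 : Matrix ι ι A).submatrix ⇑σ id = (1 : Matrix ι ι A).submatrix id ⇑σ.symm := by
    have := one_submatrix_comm (A := A) σ.symm
    simpa using this
  refine ⟨P, ?_, ?_⟩
  · refine isUnit_iff_exists.mpr ⟨(1 : Matrix ι ι A).submatrix ⇑σ id, ?_, ?_⟩
    · rw [hPalt, submatrix_mul_equiv, one_mul, Matrix.submatrix_id_id]
    · rw [hQalt, hPdef, submatrix_mul_equiv, one_mul, Matrix.submatrix_id_id]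
  · have hPH : Pᴴ = (1 : Matrix ι ι A).submatrix id ⇑σ.symm := by
      rw [hPdef, conjTranspose_submatrix, conjTranspose_one]
    rw [mul_assoc, hPdef, Matrix.mul_submatrix_one, hPH, Matrix.one_submatrix_mul]
    simp [Matrix.submatrix_submatrix]

lemma cng_blocks {κ₁ κ₂ : Type*} [Fintype κ₁] [Fintype κ₂] [DecidableEq κ₁] [DecidableEq κ₂]
    (S0 : Matrix κ₁ κ₁ A) {J₁ J₂ : Matrix κ₂ κ₂ A} (h : Cng J₁ J₂) :
    Cng (Matrix.fromBlocks S0 0 0 J₁) (Matrix.fromBlocks S0 0 0 J₂) := by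
  obtain ⟨P, hP, hP2⟩ := h
  obtain ⟨Q, hQ1, hQ2⟩ := isUnit_iff_exists.mp hP
  refine ⟨Matrix.fromBlocks 1 0 0 P, ?_, ?_⟩
  · refine isUnit_iff_exists.mpr ⟨Matrix.fromBlocks 1 0 0 Q, ?_, ?_⟩
    · rw [Matrix.fromBlocks_multiply]
      simp [hQ1, Matrix.fromBlocks_one]
    · rw [Matrix.fromBlocks_multiply]
      simp [hQ2, Matrix.fromBlocks_one]
  · rw [Matrix.fromBlocks_conjTranspose, Matrix.fromBlocks_multiply, Matrix.fromBlocks_multiply]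
    simp [hP2, mul_assoc]

end Cng
section TwoByTwo

variable (A : Type*) [Ring A]

/-- The standard symplectic 2×2 block. -/
def SmM : Matrix (Fin 2) (Fin 2) A := !![0, 1; -1, 0]

/-- Its inverse. -/
def SmiM : Matrix (Fin 2) (Fin 2) A := !![0, -1; 1, 0]

variable {A}

lemma SmM_mul_SmiM : SmM A * SmiM A = 1 := by
  ext i j
  fin_cases i <;> fin_cases j <;>
    simp [SmM, SmiM, Matrix.mul_apply, Fin.sum_univ_two, Matrix.one_apply]

lemma SmiM_mul_SmM : SmiM A * SmM A = 1 := by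
  ext i j
  fin_cases i <;> fin_cases j <;>
    simp [SmM, SmiM, Matrix.mul_apply, Fin.sum_univ_two, Matrix.one_apply]

lemma SmM_sq : SmM A * SmM A = -1 := by
  ext i j
  fin_cases i <;> fin_cases j <;>
    simp [SmM, Matrix.mul_apply, Fin.sum_univ_two, Matrix.one_apply]

variable [StarRing A]

lemma SmM_H : (SmM A)ᴴ = -(SmM A) := by
  ext i j
  fin_cases i <;> fin_cases j <;>
    simp [SmM, Matrix.conjTranspose_apply]

lemma SmiM_H : (SmiM A)ᴴ = SmM A := by
  ext i j
  fin_cases i <;> fin_cases j <;>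
    simp [SmM, SmiM, Matrix.conjTranspose_apply]

variable [IsLocalRing A]

lemma isUnit_g22 {a d : A} (ha : a ∈ nonunits A) (hd : d ∈ nonunits A) :
    IsUnit (!![a, 1; -1, d]) := by
  have hv1 : IsUnit (1 + a * d) := nu_one_add (nu_mul_left ha d)
  have hv2 : IsUnit (1 + d * a) := nu_one_add (nu_mul_left hd a)
  have hga : !![a, 1; -1, d] * !![d, -1; 1, a] = !![1 + a * d, 0; 0, 1 + d * a] := by
    rw [Matrix.mul_fin_two]
    ext i j
    fin_cases i <;> fin_cases j <;> simp <;> abel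
  have hgb : !![d, -1; 1, a] * !![a, 1; -1, d] = !![1 + d * a, 0; 0, 1 + a * d] := by
    rw [Matrix.mul_fin_two]
    ext i j
    fin_cases i <;> fin_cases j <;> simp <;> abel
  set R : Matrix (Fin 2) (Fin 2) A :=
    !![d, -1; 1, a] * !![(↑hv1.unit⁻¹ : A), 0; 0, (↑hv2.unit⁻¹ : A)] with hRdef
  set L : Matrix (Fin 2) (Fin 2) A :=
    !![(↑hv2.unit⁻¹ : A), 0; 0, (↑hv1.unit⁻¹ : A)] * !![d, -1; 1, a] with hLdef
  have hgR : !![a, 1; -1, d] * R = 1 := by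
    rw [hRdef, ← mul_assoc, hga, Matrix.mul_fin_two, Matrix.one_fin_two]
    ext i j
    fin_cases i <;> fin_cases j <;>
      simp [hv1.mul_val_inv, hv2.mul_val_inv]
  have hLg : L * !![a, 1; -1, d] = 1 := by
    rw [hLdef, mul_assoc, hgb, Matrix.mul_fin_two, Matrix.one_fin_two]
    ext i j
    fin_cases i <;> fin_cases j <;>
      simp [hv1.val_inv_mul, hv2.val_inv_mul]
  have hLR : L = R := by
    calc L = L * (!![a, 1; -1, d] * R) := by rw [hgR, mul_one]
      _ = (L * !![a, 1; -1, d]) * R := by rw [← mul_assoc]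
      _ = R := by rw [hLg, one_mul]
  exact isUnit_iff_exists.mpr ⟨R, hgR, hLR ▸ hLg⟩

end TwoByTwo

section SmallFacts

variable {A : Type*} [Ring A] [StarRing A] [IsLocalRing A]
variable {ι : Type*} [Fintype ι] [DecidableEq ι]

lemma diag_nonunit (h2 : IsUnit (2 : A)) (hsk : ∀ a : A, a - star a ∈ nonunits A)
    {J : Matrix ι ι A} (hJh : Jᴴ = -J) (i : ι) : J i i ∈ nonunits A := by
  intro hunit
  have hstar : star (J i i) = -(J i i) := by
    have := congrFun (congrFun hJh i) i
    simpa [Matrix.conjTranspose_apply] using this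
  have h := hsk (J i i)
  rw [hstar, sub_neg_eq_add, ← two_mul] at h
  exact h (h2.mul hunit)

lemma row_unit {J : Matrix ι ι A} (hJ : IsUnit J) (i : ι) : ∃ k, IsUnit (J i k) := by
  by_contra hall
  push_neg at hall
  obtain ⟨K, hK1, hK2⟩ := isUnit_iff_exists.mp hJ
  have h1 : (J * K) i i = 1 := by rw [hK1, Matrix.one_apply_eq]
  rw [Matrix.mul_apply] at h1
  have : (∑ k, J i k * K k i) ∈ nonunits A :=
    nu_sum fun k _ => nu_mul_left (hall k) (K k i)
  rw [h1] at this
  exact this isUnit_one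

lemma isUnit_submatrix {κ : Type*} [Fintype κ] [DecidableEq κ] (e : κ ≃ ι)
    {J : Matrix ι ι A} (h : IsUnit J) : IsUnit (J.submatrix e e) := by
  obtain ⟨K, hK1, hK2⟩ := isUnit_iff_exists.mp h
  refine isUnit_iff_exists.mpr ⟨K.submatrix e e, ?_, ?_⟩
  · rw [Matrix.submatrix_mul_equiv, hK1, Matrix.submatrix_one_equiv]
  · rw [Matrix.submatrix_mul_equiv, hK2, Matrix.submatrix_one_equiv]

end SmallFacts
section Reduce

variable {A : Type*} [Ring A] [StarRing A] [IsLocalRing A]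

lemma reduce {m : ℕ} (h2 : IsUnit (2 : A)) (hsk : ∀ a : A, a - star a ∈ nonunits A)
    {e : ℕ} (he : e ≠ 0)
    (hprod : ∀ l : List A, l.length = e → (∀ x ∈ l, x ∈ nonunits A) → l.prod = 0)
    (J : Matrix (Fin 2 ⊕ Fin m) (Fin 2 ⊕ Fin m) A)
    (hJ : IsUnit J) (hJh : Jᴴ = -J) :
    ∃ J' : Matrix (Fin m) (Fin m) A, IsUnit J' ∧ J'ᴴ = -J' ∧
      Cng J (Matrix.fromBlocks (SmM A) 0 0 J') := by
  classical
  set i0 : Fin 2 ⊕ Fin m := Sum.inl 0 with hi0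
  set i1 : Fin 2 ⊕ Fin m := Sum.inl 1 with hi1
  have hne01 : i0 ≠ i1 := by simp [hi0, hi1]
  obtain ⟨k, hk⟩ := row_unit hJ i0
  have hk0 : k ≠ i0 := fun h => diag_nonunit h2 hsk hJh i0 (h ▸ hk)
  -- Step 1: permute so that the (i0, i1) entry is a unit
  set σ := Equiv.swap i1 k with hσ
  set J2 := J.submatrix σ σ with hJ2def
  have hc1 : Cng J J2 := cng_perm σ J
  have hJ2u : IsUnit J2 := cng_isUnit hc1 hJ
  have hJ2h : J2ᴴ = -J2 := cng_skew hc1 hJh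
  have hJ2e : IsUnit (J2 i0 i1) := by
    have h0 : σ i0 = i0 := Equiv.swap_apply_of_ne_of_ne hne01 (Ne.symm hk0)
    have h1 : σ i1 = k := Equiv.swap_apply_left i1 k
    have : J2 i0 i1 = J i0 k := by rw [hJ2def, Matrix.submatrix_apply, h0, h1]
    rwa [this]
  -- Step 2: scale so that the (i0, i1) entry is 1
  set c : A := ↑hJ2e.unit⁻¹ with hcdef
  set dv : (Fin 2 ⊕ Fin m) → A := fun i => if i = i1 then c else 1 with hdvdef
  set D := Matrix.diagonal dv with hDdef
  have hDu : IsUnit D := by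
    refine isUnit_iff_exists.mpr
      ⟨Matrix.diagonal (fun i => if i = i1 then (J2 i0 i1) else 1), ?_, ?_⟩
    · have hfun : (fun i => dv i * (if i = i1 then (J2 i0 i1) else 1)) = fun _ => (1 : A) := by
        funext i
        by_cases h : i = i1 <;> simp [hdvdef, h, hcdef, hJ2e.val_inv_mul]
      rw [hDdef, Matrix.diagonal_mul_diagonal, hfun, Matrix.diagonal_one]
    · have hfun : (fun i => (if i = i1 then (J2 i0 i1) else 1) * dv i) = fun _ => (1 : A) := by
        funext i
        by_cases h : i = i1 <;> simp [hdvdef, h, hcdef, hJ2e.mul_val_inv]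
      rw [hDdef, Matrix.diagonal_mul_diagonal, hfun, Matrix.diagonal_one]
  set J3 := Dᴴ * J2 * D with hJ3def
  have hc2 : Cng J2 J3 := ⟨D, hDu, rfl⟩
  have hJ3u : IsUnit J3 := cng_isUnit hc2 hJ2u
  have hJ3h : J3ᴴ = -J3 := cng_skew hc2 hJ2h
  have hJ3apply : ∀ i j, J3 i j = star (dv i) * J2 i j * dv j := by
    intro i j
    rw [hJ3def, hDdef, Matrix.diagonal_conjTranspose, Matrix.mul_diagonal,
      Matrix.diagonal_mul]
    rfl
  have hJ3e : J3 i0 i1 = 1 := by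
    rw [hJ3apply]
    have hd0 : dv i0 = 1 := by simp [hdvdef, hne01]
    have hd1 : dv i1 = c := by simp [hdvdef]
    rw [hd0, hd1, star_one, one_mul, hcdef]
    exact hJ2e.mul_val_inv
  -- Step 3: block decomposition
  set g := J3.toBlocks₁₁ with hgdef
  set B := J3.toBlocks₁₂ with hBdef
  set C := J3.toBlocks₂₁ with hCdef
  set Dm := J3.toBlocks₂₂ with hDmdef
  have hJ3b : J3 = Matrix.fromBlocks g B C Dm := (Matrix.fromBlocks_toBlocks J3).symm
  have hblockskew : Matrix.fromBlocks gᴴ Cᴴ Bᴴ Dmᴴ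
      = Matrix.fromBlocks (-g) (-B) (-C) (-Dm) := by
    rw [← Matrix.fromBlocks_conjTranspose, ← Matrix.fromBlocks_neg, ← hJ3b, hJ3h]
  obtain ⟨hgh, hCh, hBh, hDh⟩ := Matrix.fromBlocks_inj.mp hblockskew
  have hg01 : g 0 1 = 1 := hJ3e
  have hg10 : g 1 0 = -1 := by
    have h := congrFun (congrFun hgh 1) 0
    rw [Matrix.conjTranspose_apply, Matrix.neg_apply, hg01, star_one] at h
    exact neg_eq_iff_eq_neg.mp h.symm
  have ha : g 0 0 ∈ nonunits A := diag_nonunit h2 hsk hJ3h i0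
  have hd : g 1 1 ∈ nonunits A := diag_nonunit h2 hsk hJ3h i1
  have hgl : g = !![g 0 0, 1; -1, g 1 1] := by
    ext i j
    fin_cases i <;> fin_cases j <;> simp [hg01, hg10]
  have hgU : IsUnit g := by
    rw [hgl]
    exact isUnit_g22 ha hd
  have hgS : ∀ i j, (g - SmM A) i j ∈ MM A 1 := by
    intro i j
    rw [hgl]
    fin_cases i <;> fin_cases j
    · simpa [SmM, Matrix.sub_apply] using mem_MM_of_nonunit ha
    · simpa [SmM, Matrix.sub_apply] using AddSubgroup.zero_mem (MM A 1)
    · simpa [SmM, Matrix.sub_apply] using AddSubgroup.zero_mem (MM A 1)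
    · simpa [SmM, Matrix.sub_apply] using mem_MM_of_nonunit hd
  -- Step 4: Newton normalization of the 2×2 block
  obtain ⟨q, hqU, hq⟩ := newton he hprod h2 (SmM A) SmM_H e 1 one_ne_zero (by omega)
    g hgU hgh hgS
  set P1 := Matrix.fromBlocks q 0 0 (1 : Matrix (Fin m) (Fin m) A) with hP1def
  have hP1u : IsUnit P1 := by
    obtain ⟨qi, hq1, hq2⟩ := isUnit_iff_exists.mp hqU
    refine isUnit_iff_exists.mpr ⟨Matrix.fromBlocks qi 0 0 (1 : Matrix (Fin m) (Fin m) A), ?_, ?_⟩ <;>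
    · rw [hP1def, Matrix.fromBlocks_multiply]
      simp [hq1, hq2, Matrix.fromBlocks_one]
  set B2 := qᴴ * B with hB2def
  set C2 := C * q with hC2def
  set J4 := Matrix.fromBlocks (SmM A) B2 C2 Dm with hJ4def
  have hJ4eq : P1ᴴ * J3 * P1 = J4 := by
    rw [hJ3b, hP1def, Matrix.fromBlocks_conjTranspose]
    simp only [conjTranspose_zero, conjTranspose_one]
    rw [Matrix.fromBlocks_multiply, Matrix.fromBlocks_multiply, hJ4def]
    refine Matrix.fromBlocks_inj.mpr ⟨?_, ?_, ?_, ?_⟩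
    · simp only [Matrix.zero_mul, Matrix.mul_zero, add_zero, zero_add,
        Matrix.one_mul, Matrix.mul_one]
      exact hq
    · simp only [Matrix.zero_mul, Matrix.mul_zero, add_zero, zero_add,
        Matrix.one_mul, Matrix.mul_one]
      exact hB2def.symm
    · simp only [Matrix.zero_mul, Matrix.mul_zero, add_zero, zero_add,
        Matrix.one_mul, Matrix.mul_one]
      exact hC2def.symm
    · simp only [Matrix.zero_mul, Matrix.mul_zero, add_zero, zero_add,
        Matrix.one_mul, Matrix.mul_one]
  have hc3 : Cng J3 J4 := ⟨P1, hP1u, hJ4eq⟩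
  have hJ4h : J4ᴴ = -J4 := cng_skew hc3 hJ3h
  have hb2 : Matrix.fromBlocks (SmM A)ᴴ C2ᴴ B2ᴴ Dmᴴ
      = Matrix.fromBlocks (-(SmM A)) (-B2) (-C2) (-Dm) := by
    rw [← Matrix.fromBlocks_conjTranspose, ← Matrix.fromBlocks_neg, ← hJ4def, hJ4h]
  obtain ⟨-, hC2h, hB2h, hDmh⟩ := Matrix.fromBlocks_inj.mp hb2
  -- Step 5: eliminate the off-diagonal blocks
  set T := Matrix.fromBlocks (1 : Matrix (Fin 2) (Fin 2) A) (-(SmiM A * B2)) 0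
    (1 : Matrix (Fin m) (Fin m) A) with hTdef
  have hTu : IsUnit T := by
    refine isUnit_iff_exists.mpr ⟨Matrix.fromBlocks (1 : Matrix (Fin 2) (Fin 2) A)
        (SmiM A * B2) 0 (1 : Matrix (Fin m) (Fin m) A), ?_, ?_⟩ <;>
    · rw [hTdef, Matrix.fromBlocks_multiply]
      simp [Matrix.fromBlocks_one]
  set J' := C2 * -(SmiM A * B2) + Dm with hJ'def
  have hY : (-(SmiM A * B2))ᴴ = C2 * SmM A := by
    rw [conjTranspose_neg, conjTranspose_mul, SmiM_H, hB2h, Matrix.neg_mul, neg_neg]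
  have hJ5eq : Tᴴ * J4 * T = Matrix.fromBlocks (SmM A) 0 0 J' := by
    have hn12 : SmM A * -(SmiM A * B2) + B2 = 0 := by
      rw [Matrix.mul_neg, ← Matrix.mul_assoc, SmM_mul_SmiM, Matrix.one_mul, neg_add_cancel]
    rw [mul_assoc, hTdef, hJ4def, Matrix.fromBlocks_conjTranspose, hY]
    simp only [conjTranspose_zero, conjTranspose_one]
    rw [Matrix.fromBlocks_multiply, Matrix.fromBlocks_multiply]
    refine Matrix.fromBlocks_inj.mpr ⟨?_, ?_, ?_, ?_⟩
    · simp only [Matrix.mul_one, Matrix.mul_zero, add_zero, Matrix.one_mul,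
        Matrix.zero_mul, zero_add]
    · simp only [Matrix.mul_one, Matrix.mul_zero, add_zero, Matrix.one_mul,
        Matrix.zero_mul, zero_add]
      exact hn12
    · simp only [Matrix.mul_one, Matrix.mul_zero, add_zero, Matrix.one_mul,
        Matrix.zero_mul, zero_add]
      rw [Matrix.mul_assoc, SmM_sq, Matrix.mul_neg, Matrix.mul_one, neg_add_cancel]
    · simp only [Matrix.mul_one, Matrix.mul_zero, add_zero, Matrix.one_mul,
        Matrix.zero_mul, zero_add]
      rw [hn12, Matrix.mul_zero, zero_add]
  have hc4 : Cng J4 (Matrix.fromBlocks (SmM A) 0 0 J') := ⟨T, hTu, hJ5eq⟩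
  have hcAll : Cng J (Matrix.fromBlocks (SmM A) 0 0 J') :=
    cng_trans (cng_trans (cng_trans hc1 hc2) hc3) hc4
  have hJ5u : IsUnit (Matrix.fromBlocks (SmM A) 0 0 J') := cng_isUnit hcAll hJ
  have hJ5h : (Matrix.fromBlocks (SmM A) 0 0 J')ᴴ = -(Matrix.fromBlocks (SmM A) 0 0 J') :=
    cng_skew hcAll hJh
  have hJ'h : J'ᴴ = -J' := by
    rw [Matrix.fromBlocks_conjTranspose, Matrix.fromBlocks_neg] at hJ5h
    exact (Matrix.fromBlocks_inj.mp hJ5h).2.2.2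
  have hJ'u : IsUnit J' := by
    obtain ⟨R, hR1, hR2⟩ := isUnit_iff_exists.mp hJ5u
    have hRb : R = Matrix.fromBlocks R.toBlocks₁₁ R.toBlocks₁₂ R.toBlocks₂₁ R.toBlocks₂₂ :=
      (Matrix.fromBlocks_toBlocks R).symm
    rw [hRb, ← Matrix.fromBlocks_one, Matrix.fromBlocks_multiply] at hR1 hR2
    have h22 := (Matrix.fromBlocks_inj.mp hR1).2.2.2
    have h22' := (Matrix.fromBlocks_inj.mp hR2).2.2.2
    refine isUnit_iff_exists.mpr ⟨R.toBlocks₂₂, by simpa using h22, by simpa using h22'⟩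
  exact ⟨J', hJ'u, hJ'h, hcAll⟩

end Reduce
section Main

variable {A : Type*} [Ring A] [StarRing A] [IsLocalRing A]

lemma main_cng (h2 : IsUnit (2 : A)) (hsk : ∀ a : A, a - star a ∈ nonunits A)
    {e : ℕ} (he : e ≠ 0)
    (hprod : ∀ l : List A, l.length = e → (∀ x ∈ l, x ∈ nonunits A) → l.prod = 0) :
    ∀ n (J₁ J₂ : Matrix (Fin n) (Fin n) A), IsUnit J₁ → J₁ᴴ = -J₁ → IsUnit J₂ → J₂ᴴ = -J₂ →
      Cng J₁ J₂ := by
  intro n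
  induction n using Nat.strong_induction_on with
  | _ n ih =>
    match n with
    | 0 =>
      intro J₁ J₂ _ _ _ _
      exact ⟨1, isUnit_one, by ext i j; exact i.elim0⟩
    | 1 =>
      intro J₁ J₂ hJ₁ hsh₁ _ _
      exfalso
      obtain ⟨k, hk⟩ := row_unit hJ₁ 0
      have hk0 : k = 0 := Subsingleton.elim k 0
      exact diag_nonunit h2 hsk hsh₁ 0 (hk0 ▸ hk)
    | (m+2) =>
      intro J₁ J₂ hJ₁ hsh₁ hJ₂ hsh₂
      have e2 : (Fin 2 ⊕ Fin m) ≃ Fin (m+2) := finSumFinEquiv.trans (finCongr (by omega))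
      set K₁ := J₁.submatrix ⇑e2 ⇑e2 with hK₁
      set K₂ := J₂.submatrix ⇑e2 ⇑e2 with hK₂
      have hnegsub : ∀ (J : Matrix (Fin (m+2)) (Fin (m+2)) A),
          (-J).submatrix ⇑e2 ⇑e2 = -(J.submatrix ⇑e2 ⇑e2) := by
        intro J; ext i j; simp
      have hK₁u : IsUnit K₁ := isUnit_submatrix e2 hJ₁
      have hK₁h : K₁ᴴ = -K₁ := by
        rw [hK₁, conjTranspose_submatrix, hsh₁, hnegsub]
      have hK₂u : IsUnit K₂ := isUnit_submatrix e2 hJ₂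
      have hK₂h : K₂ᴴ = -K₂ := by
        rw [hK₂, conjTranspose_submatrix, hsh₂, hnegsub]
      obtain ⟨J₁', h1u, h1h, h1c⟩ := reduce h2 hsk he hprod K₁ hK₁u hK₁h
      obtain ⟨J₂', h2u, h2h, h2c⟩ := reduce h2 hsk he hprod K₂ hK₂u hK₂h
      have hrec : Cng J₁' J₂' := ih m (by omega) J₁' J₂' h1u h1h h2u h2h
      have hKK : Cng K₁ K₂ :=
        cng_trans (cng_trans h1c (cng_blocks (SmM A) hrec)) (cng_symm h2c)
      have hfin := cng_submatrix e2.symm hKK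
      have hs1 : K₁.submatrix ⇑e2.symm ⇑e2.symm = J₁ := by
        rw [hK₁, Matrix.submatrix_submatrix, Equiv.self_comp_symm, Matrix.submatrix_id_id]
      have hs2 : K₂.submatrix ⇑e2.symm ⇑e2.symm = J₂ := by
        rw [hK₂, Matrix.submatrix_submatrix, Equiv.self_comp_symm, Matrix.submatrix_id_id]
      rwa [hs1, hs2] at hfin

end Main

/-- Let `A` be a local ring with involution `*` such that `2` is a unit,
`a - a*` is a non-unit for every `a`, and the Jacobson radical (= set of non-units) is
nilpotent.  Then any two invertible skew-hermitian `n × n` matrices over `A` are congruent: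
there exists `P ∈ GL_n(A)` with `PᴴJ₁P = J₂`.  (Equivalently, all non-degenerate
skew-hermitian forms on a free right `A`-module of rank `n` are equivalent.) -/
theorem stmt6 {A : Type*} [Ring A] [StarRing A] [IsLocalRing A]
    (h2 : IsUnit (2 : A)) (hsk : ∀ a : A, a - star a ∈ nonunits A)
    (hnil : ∃ e : ℕ, 0 < e ∧
      ∀ l : List A, l.length = e → (∀ x ∈ l, x ∈ nonunits A) → l.prod = 0)
    {n : ℕ} (J₁ J₂ : Matrix (Fin n) (Fin n) A)
    (hJ₁ : IsUnit J₁) (hsh₁ : J₁ᴴ = -J₁)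
    (hJ₂ : IsUnit J₂) (hsh₂ : J₂ᴴ = -J₂) :
    ∃ P : Matrix (Fin n) (Fin n) A, IsUnit P ∧ Pᴴ * J₁ * P = J₂ := by
  obtain ⟨e, he0, hprod⟩ := hnil
  exact main_cng h2 hsk (by omega : e ≠ 0) hprod n J₁ J₂ hJ₁ hsh₁ hJ₂ hsh₂
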